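/- (Average chord length bound.) Fix d ≥ 2, let r be an arc-length parameterization of a closed curve of length 1 in ℝ^d, and let s ∈ [0, 1/2]. Then ∫_0^1 ‖r(t+s) − r(t)‖ dt ≤ sin(πs)/π. -/

import Mathlib

open MeasureTheory Set Real Function

noncomputable section

/-- `r` is an arc-length parameterization of a closed curve of length 1 in `ℝ^d`. -/
def IsUnitClosedCurve (d : ℕ) (r : ℝ → EuclideanSpace ℝ (Fin d)) : Prop :=
  Continuous r ∧ Periodic r 1 ∧ LipschitzWith 1 r ∧
    eVariationOn r (Icc (0:ℝ) 1) = 1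

/-- The length of a shortest closed curve covering `S`. -/
def w {d : ℕ} (S : Set (EuclideanSpace ℝ (Fin d))) : ENNReal :=
  ⨅ (γ : {γ : ℝ → EuclideanSpace ℝ (Fin d) //
      Continuous γ ∧ Periodic γ 1 ∧ S ⊆ γ '' Icc (0:ℝ) 1}),
    eVariationOn γ.1 (Icc (0:ℝ) 1)

/-- A partition of `[0,1)` into `k` measurable sets of measure `1/k` each. -/
def IsEqualPartition (k : ℕ) (A : Fin k → Set ℝ) : Prop :=
  (∀ i, MeasurableSet (A i)) ∧ Pairwise (onFun Disjoint A) ∧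
    (⋃ i, A i) = Ico (0:ℝ) 1 ∧ ∀ i, volume (A i) = ENNReal.ofReal (1 / k)

def betaCurve (d k : ℕ) (r : ℝ → EuclideanSpace ℝ (Fin d)) : ENNReal :=
  ⨅ (A : {A : Fin k → Set ℝ // IsEqualPartition k A}),
    (k : ENNReal)⁻¹ * ∑ i, w (r '' A.1 i)

def betaSup (d k : ℕ) : ENNReal :=
  ⨆ (r : {r : ℝ → EuclideanSpace ℝ (Fin d) // IsUnitClosedCurve d r}),
    betaCurve d k r.1

/-- A partition of `C` into `k` nonempty sets. -/
def IsPartitionInto {α : Type*} (k : ℕ) (S : Fin k → Set α) (C : Set α) : Prop :=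
  (∀ i, (S i).Nonempty) ∧ Pairwise (onFun Disjoint S) ∧ (⋃ i, S i) = C

def gammaCurve {d : ℕ} (k : ℕ) (C : Set (EuclideanSpace ℝ (Fin d))) : ENNReal :=
  ⨅ (S : {S : Fin k → Set (EuclideanSpace ℝ (Fin d)) // IsPartitionInto k S C}),
    ⨆ i, w (S.1 i)

def gammaSup (d k : ℕ) : ENNReal :=
  ⨆ (r : {r : ℝ → EuclideanSpace ℝ (Fin d) // IsUnitClosedCurve d r}),
    gammaCurve k (r.1 '' Icc (0:ℝ) 1)

def circlePt (t : ℝ) : EuclideanSpace ℝ (Fin 2) :=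
  (EuclideanSpace.equiv (Fin 2) ℝ).symm ![Real.cos t, Real.sin t]

open scoped ENNReal NNReal
open AddCircle

set_option maxHeartbeats 1000000
section AvgChordAux

instance avgChordFactOne : Fact ((0:ℝ) < 1) := ⟨one_pos⟩

namespace AvgChord

lemma liftIco_periodic_coe (f : ℝ → ℂ) (hf : Periodic f 1) (x : ℝ) :
    AddCircle.liftIco 1 0 f ↑x = f x := by
  have h1 : Int.fract x ∈ Ico (0:ℝ) (0+1) := ⟨Int.fract_nonneg x, by
    simpa using Int.fract_lt_one x⟩
  have h2 : ((Int.fract x : ℝ) : AddCircle (1:ℝ)) = ((x : ℝ) : AddCircle (1:ℝ)) := by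
    apply (QuotientAddGroup.eq_iff_sub_mem).mpr
    have : Int.fract x - x = -(⌊x⌋:ℤ) • (1:ℝ) := by
      rw [Int.fract]; ring_nf
    rw [this]
    exact AddSubgroup.zsmul_mem _ (AddSubgroup.mem_zmultiples 1) _
  rw [← h2, AddCircle.liftIco_coe_apply h1]
  have h3 : Int.fract x = x - (⌊x⌋:ℤ) • (1:ℝ) := by
    rw [Int.fract]; push_cast [zsmul_eq_mul]; ring
  rw [h3, hf.sub_zsmul_eq]

lemma fourier_sub' {n : ℤ} (x y : AddCircle (1:ℝ)) :
    fourier n (x - y) = fourier n x * fourier (-n) y := by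
  rw [fourier_apply, fourier_apply, fourier_apply, ← Circle.coe_mul]
  congr 1
  rw [← AddCircle.toCircle_add]
  congr 1
  rw [zsmul_sub, neg_zsmul, sub_eq_add_neg]

lemma fourierCoeff_translate (G : AddCircle (1:ℝ) → ℂ) (σ : AddCircle (1:ℝ)) (n : ℤ) :
    fourierCoeff (fun x => G (x + σ)) n = fourier n σ * fourierCoeff G n := by
  unfold fourierCoeff
  have key := MeasureTheory.integral_add_right_eq_self
    (μ := (haarAddCircle : Measure (AddCircle (1:ℝ))))
    (fun x => fourier (-n) (x - σ) • G x) σ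
  simp only [add_sub_cancel_right] at key
  beta_reduce
  rw [key, ← integral_const_mul]
  congr 1; ext x
  simp only [smul_eq_mul]
  rw [fourier_sub', neg_neg]; ring

lemma parseval_cont (G : C(AddCircle (1:ℝ), ℂ)) :
    Summable (fun n => ‖fourierCoeff (⇑G) n‖^2) ∧
    ∑' n : ℤ, ‖fourierCoeff (⇑G) n‖^2 = ∫ x, ‖G x‖^2 ∂haarAddCircle := by
  set F := ContinuousMap.toLp (E := ℂ) 2 haarAddCircle ℂ G with hF
  have hcoeff : ∀ n, fourierCoeff (F : AddCircle (1:ℝ) → ℂ) n = fourierCoeff (⇑G) n :=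
    fun n => fourierCoeff_toLp G n
  constructor
  · have h1 : Memℓp (fun n => fourierBasis.repr F n) 2 := (fourierBasis.repr F).property
    have h2 := (memℓp_gen_iff (by norm_num : (0:ℝ) < (2:ℝ≥0∞).toReal)).mp h1
    simp only [fourierBasis_repr, hcoeff] at h2
    simpa using h2
  · have h := tsum_sq_fourierCoeff F
    simp only [hcoeff] at h
    rw [h]
    apply integral_congr_ae
    filter_upwards [ContinuousMap.coeFn_toLp (p := 2) (𝕜 := ℂ) haarAddCircle G] with x hx
    rw [hx]

lemma cont_integrable (G : C(AddCircle (1:ℝ), ℂ)) : Integrable (⇑G) haarAddCircle :=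
  G.continuous.integrable_of_hasCompactSupport
    (IsCompact.of_isClosed_subset isCompact_univ (isClosed_tsupport _) (subset_univ _))

lemma fourierCoeff_sub (F G : C(AddCircle (1:ℝ), ℂ)) (n : ℤ) :
    fourierCoeff (fun x => F x - G x) n = fourierCoeff (⇑F) n - fourierCoeff (⇑G) n := by
  unfold fourierCoeff
  have hb : ∀ᵐ x ∂(haarAddCircle : Measure (AddCircle (1:ℝ))),
      ‖((fourier (-n) : C(AddCircle (1:ℝ), ℂ)) x)‖ ≤ 1 :=
    Filter.Eventually.of_forall (fun x => by
      rw [show ((fourier (-n) : C(AddCircle (1:ℝ), ℂ)) x) = (toCircle ((-n) • x) : ℂ) from rfl]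
      exact (Circle.norm_coe _).le)
  have hm := (map_continuous (fourier (T := 1) (-n))).aestronglyMeasurable
    (μ := (haarAddCircle : Measure (AddCircle (1:ℝ))))
  have hiF : Integrable (fun x => fourier (-n) x • F x) haarAddCircle := by
    simpa [smul_eq_mul] using (cont_integrable F).bdd_mul (c := 1) hm hb
  have hiG : Integrable (fun x => fourier (-n) x • G x) haarAddCircle := by
    simpa [smul_eq_mul] using (cont_integrable G).bdd_mul (c := 1) hm hb
  rw [← integral_sub hiF hiG]
  congr 1; ext x; rw [smul_eq_mul, smul_eq_mul, smul_eq_mul, mul_sub]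

lemma norm_fourier_sub_one (n : ℤ) (σ : ℝ) :
    ‖(fourier n ((σ : ℝ) : AddCircle (1:ℝ)) : ℂ) - 1‖^2 = 4 * Real.sin (π * n * σ)^2 := by
  rw [fourier_coe_apply]
  have h1 : 2 * π * Complex.I * n * σ / ((1:ℝ):ℂ) = ((2 * π * n * σ : ℝ) : ℂ) * Complex.I := by
    push_cast; ring
  rw [h1, Complex.exp_mul_I]
  set θ : ℝ := 2 * π * n * σ with hθ
  have h2 : (Complex.cos θ + Complex.sin θ * Complex.I - 1) =
      Complex.mk (Real.cos θ - 1) (Real.sin θ) := by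
    apply Complex.ext <;> simp [Complex.cos_ofReal_re, Complex.sin_ofReal_re]
  rw [h2]
  rw [Complex.sq_norm, Complex.normSq_mk]
  have h3 : (cos θ - 1) * (cos θ - 1) + sin θ * sin θ = 2 - 2 * cos θ := by
    nlinarith [sin_sq_add_cos_sq θ]
  rw [h3]
  have h4 : θ = 2 * (π * n * σ) := by rw [hθ]; ring
  rw [h4, Real.cos_two_mul]
  nlinarith [sin_sq_add_cos_sq (π * n * σ)]

lemma abs_sin_nat_mul (θ : ℝ) : ∀ n : ℕ, |Real.sin (n * θ)| ≤ n * |Real.sin θ| := by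
  intro n
  induction n with
  | zero => simp
  | succ n ih =>
    have hrw : ((n:ℝ)+1) * θ = n * θ + θ := by ring
    push_cast
    rw [hrw, Real.sin_add]
    have b1 : |Real.sin (n*θ) * Real.cos θ| ≤ |Real.sin (n*θ)| := by
      rw [abs_mul]; exact mul_le_of_le_one_right (abs_nonneg _) (Real.abs_cos_le_one θ)
    have b2 : |Real.cos (n*θ) * Real.sin θ| ≤ |Real.sin θ| := by
      rw [abs_mul]; exact mul_le_of_le_one_left (abs_nonneg _) (Real.abs_cos_le_one _)
    calc |Real.sin (n*θ) * Real.cos θ + Real.cos (n*θ) * Real.sin θ|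
        ≤ |Real.sin (n*θ) * Real.cos θ| + |Real.cos (n*θ) * Real.sin θ| := abs_add_le _ _
      _ ≤ |Real.sin (n*θ)| + |Real.sin θ| := add_le_add b1 b2
      _ ≤ n * |Real.sin θ| + |Real.sin θ| := add_le_add ih le_rfl
      _ = ((n:ℝ)+1) * |Real.sin θ| := by ring

lemma sin_sq_int_mul (θ : ℝ) (n : ℤ) : Real.sin (n * θ)^2 ≤ (n:ℝ)^2 * Real.sin θ^2 := by
  have key : ∀ m : ℕ, Real.sin ((m:ℝ)*θ)^2 ≤ (m:ℝ)^2 * Real.sin θ^2 := by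
    intro m
    calc Real.sin ((m:ℝ)*θ)^2 = |Real.sin ((m:ℝ)*θ)|^2 := (sq_abs _).symm
      _ ≤ ((m:ℝ)*|Real.sin θ|)^2 := pow_le_pow_left₀ (abs_nonneg _) (abs_sin_nat_mul θ m) 2
      _ = (m:ℝ)^2 * Real.sin θ^2 := by rw [mul_pow, sq_abs]
  rcases Int.natAbs_eq n with h | h
  · rw [h, Int.cast_natCast]; exact key n.natAbs
  · rw [h, Int.cast_neg, Int.cast_natCast]
    have hrw : -((n.natAbs:ℝ)) * θ = -((n.natAbs:ℝ)*θ) := by ring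
    rw [hrw, Real.sin_neg]
    simpa [neg_sq] using key n.natAbs

lemma tendsto_mul_sin_div (c : ℝ) :
    Filter.Tendsto (fun m : ℕ => ((m:ℝ)+1) * Real.sin (c / ((m:ℝ)+1)))
      Filter.atTop (nhds c) := by
  rcases eq_or_ne c 0 with rfl | hc
  · simpa using Filter.tendsto_const_nhds (x := (0:ℝ)) (f := Filter.atTop (α := ℕ))
  · have hslope : Filter.Tendsto (fun y : ℝ => Real.sin y / y) (nhdsWithin 0 {0}ᶜ) (nhds 1) := by
      have hder := Real.hasDerivAt_sin 0
      rw [hasDerivAt_iff_tendsto_slope] at hder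
      simp only [Real.cos_zero] at hder
      refine hder.congr' ?_
      filter_upwards [self_mem_nhdsWithin] with y hy
      simp [slope_def_field]
    have h0 : Filter.Tendsto (fun m : ℕ => c / ((m:ℝ)+1)) Filter.atTop (nhds 0) := by
      have h1 := tendsto_one_div_add_atTop_nhds_zero_nat (𝕜 := ℝ)
      have h2 := h1.const_mul c
      simp only [mul_zero] at h2
      refine h2.congr (fun m => ?_)
      field_simp
    have hx : Filter.Tendsto (fun m : ℕ => c / ((m:ℝ)+1)) Filter.atTop
        (nhdsWithin 0 {0}ᶜ) := by
      apply tendsto_nhdsWithin_of_tendsto_nhds_of_eventually_within _ h0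
      apply Filter.Eventually.of_forall
      intro m
      simp only [mem_compl_iff, mem_singleton_iff]
      have hm : ((m:ℝ)+1) ≠ 0 := by positivity
      exact div_ne_zero hc hm
    have hcomp := hslope.comp hx
    have hrw : (fun m : ℕ => ((m:ℝ)+1) * Real.sin (c / ((m:ℝ)+1)))
        = fun m : ℕ => c * ((fun y => Real.sin y / y) (c / ((m:ℝ)+1))) := by
      funext m
      have hm : ((m:ℝ)+1) ≠ 0 := by positivity
      field_simp
    rw [hrw]
    have := hcomp.const_mul c
    simpa using this

lemma main_identity {d : ℕ} (r : ℝ → EuclideanSpace ℝ (Fin d))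
    (hc : Continuous r) (hp : Periodic r 1) :
    ∃ a : ℤ → ℝ, (∀ n, 0 ≤ a n) ∧ ∀ σ : ℝ,
      Summable (fun n : ℤ => Real.sin (π * n * σ)^2 * a n) ∧
      ∫ t in Ioc (0:ℝ) 1, ‖r (t + σ) - r t‖^2 = ∑' n : ℤ, Real.sin (π * n * σ)^2 * a n := by
  set f : Fin d → ℝ → ℂ := fun i t => ((r t i : ℝ) : ℂ) with hf
  have hfc : ∀ i, Continuous (f i) := fun i =>
    Complex.continuous_ofReal.comp ((EuclideanSpace.proj i).continuous.comp hc)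
  have hfp : ∀ i, Periodic (f i) 1 := fun i t => by simp only [hf, hp t]
  set G : Fin d → C(AddCircle (1:ℝ), ℂ) := fun i =>
    ⟨AddCircle.liftIco 1 0 (f i), AddCircle.liftIco_continuous
      (by rw [zero_add]; simpa using ((hfp i) 0).symm) ((hfc i).continuousOn)⟩
    with hGdef
  have hG : ∀ i (x : ℝ), (G i) ((x : ℝ) : AddCircle (1:ℝ)) = f i x := fun i x =>
    liftIco_periodic_coe (f i) (hfp i) x
  set c : Fin d → ℤ → ℂ := fun i n => fourierCoeff (⇑(G i)) n with hcdef
  refine ⟨fun n => ∑ i : Fin d, 4 * ‖c i n‖^2, fun n => by positivity, fun σ => ?_⟩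
  -- translated minus original, as a continuous map
  set H : Fin d → C(AddCircle (1:ℝ), ℂ) := fun i =>
    ⟨fun x => (G i) (x + ((σ : ℝ) : AddCircle (1:ℝ))) - (G i) x,
      (((G i).continuous.comp (continuous_id.add continuous_const)).sub (G i).continuous)⟩
    with hHdef
  have hHcoeff : ∀ i n, fourierCoeff (⇑(H i)) n
      = (fourier n ((σ : ℝ) : AddCircle (1:ℝ)) - 1) * c i n := by
    intro i n
    have h1 : fourierCoeff (⇑(H i)) n =
        fourierCoeff (fun x => (G i) (x + ((σ : ℝ) : AddCircle (1:ℝ)))) n - c i n := by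
      exact fourierCoeff_sub ⟨fun x => (G i) (x + ((σ : ℝ) : AddCircle (1:ℝ))),
        (G i).continuous.comp (continuous_id.add continuous_const)⟩ (G i) n
    rw [h1, fourierCoeff_translate (⇑(G i)) _ n, sub_mul, one_mul]
  have hnorm : ∀ i n, ‖fourierCoeff (⇑(H i)) n‖^2
      = Real.sin (π * n * σ)^2 * (4 * ‖c i n‖^2) := by
    intro i n
    rw [hHcoeff i n, norm_mul, mul_pow, norm_fourier_sub_one n σ]
    ring
  have hPar : ∀ i, Summable (fun n : ℤ => Real.sin (π * n * σ)^2 * (4 * ‖c i n‖^2)) ∧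
      ∑' n : ℤ, Real.sin (π * n * σ)^2 * (4 * ‖c i n‖^2)
        = ∫ x, ‖(H i) x‖^2 ∂haarAddCircle := by
    intro i
    have := parseval_cont (H i)
    constructor
    · exact this.1.congr (fun n => by rw [hnorm i n])
    · rw [← this.2]
      exact tsum_congr (fun n => (hnorm i n).symm)
  -- pointwise identity
  have hpt : ∀ t : ℝ, ‖r (t + σ) - r t‖^2 = ∑ i : Fin d, ‖(H i) ((t : ℝ) : AddCircle (1:ℝ))‖^2 := by
    intro t
    have h1 : ∀ i : Fin d, (H i) ((t : ℝ) : AddCircle (1:ℝ))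
        = ((r (t+σ) i - r t i : ℝ) : ℂ) := by
      intro i
      show (G i) (((t : ℝ) : AddCircle (1:ℝ)) + ((σ : ℝ) : AddCircle (1:ℝ))) - (G i) _ = _
      have hadd : (((t : ℝ) : AddCircle (1:ℝ)) + ((σ : ℝ) : AddCircle (1:ℝ)))
          = (((t + σ : ℝ)) : AddCircle (1:ℝ)) := rfl
      rw [hadd, hG i (t+σ), hG i t]
      simp [hf]
    rw [EuclideanSpace.norm_eq, Real.sq_sqrt (by positivity)]
    refine Finset.sum_congr rfl (fun i _ => ?_)
    rw [h1 i]
    rw [Complex.norm_real]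
    simp
  constructor
  · have hs : Summable (fun n : ℤ => ∑ i : Fin d,
        Real.sin (π * n * σ)^2 * (4 * ‖c i n‖^2)) :=
      summable_sum (fun i (_ : i ∈ Finset.univ) => (hPar i).1)
    refine hs.congr (fun n => ?_)
    rw [Finset.mul_sum]
  · have hint : ∀ i : Fin d, IntegrableOn
        (fun t : ℝ => ‖(H i) ((t : ℝ) : AddCircle (1:ℝ))‖^2) (Ioc 0 1) volume := by
      intro i
      exact (((H i).continuous.comp (AddCircle.continuous_mk' 1)).norm.pow 2).integrableOn_Ioc
    calc ∫ t in Ioc (0:ℝ) 1, ‖r (t + σ) - r t‖^2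
        = ∫ t in Ioc (0:ℝ) 1, ∑ i : Fin d, ‖(H i) ((t : ℝ) : AddCircle (1:ℝ))‖^2 := by
          apply integral_congr_ae
          exact Filter.Eventually.of_forall (fun t => hpt t)
      _ = ∑ i : Fin d, ∫ t in Ioc (0:ℝ) 1, ‖(H i) ((t : ℝ) : AddCircle (1:ℝ))‖^2 :=
          integral_finset_sum _ (fun i _ => hint i)
      _ = ∑ i : Fin d, ∫ x, ‖(H i) x‖^2 ∂haarAddCircle := by
          refine Finset.sum_congr rfl (fun i _ => ?_)
          have h2 := AddCircle.integral_preimage 1 0 (fun x : AddCircle (1:ℝ) => ‖(H i) x‖^2)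
          rw [zero_add] at h2
          rw [h2, AddCircle.volume_eq_smul_haarAddCircle, integral_smul_measure]
          simp
      _ = ∑ i : Fin d, ∑' n : ℤ, Real.sin (π * n * σ)^2 * (4 * ‖c i n‖^2) := by
          refine Finset.sum_congr rfl (fun i _ => ((hPar i).2).symm)
      _ = ∑' n : ℤ, ∑ i : Fin d, Real.sin (π * n * σ)^2 * (4 * ‖c i n‖^2) :=
          (Summable.tsum_finsetSum (fun i _ => (hPar i).1)).symm
      _ = ∑' n : ℤ, Real.sin (π * n * σ)^2 * ∑ i : Fin d, 4 * ‖c i n‖^2 := by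
          refine tsum_congr (fun n => ?_)
          rw [Finset.mul_sum]


end AvgChord

end AvgChordAux

open AvgChord in
theorem average_chord_length (d : ℕ) (hd : 2 ≤ d)
    (r : ℝ → EuclideanSpace ℝ (Fin d)) (hr : IsUnitClosedCurve d r)
    (s : ℝ) (hs : s ∈ Icc (0:ℝ) (1 / 2)) :
    ∫ t in (0:ℝ)..1, ‖r (t + s) - r t‖ ≤ Real.sin (π * s) / π := by
  obtain ⟨hc, hp, hlip, -⟩ := hr
  obtain ⟨a, ha0, hid⟩ := main_identity r hc hp
  -- chord bound from Lipschitz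
  have hchord : ∀ (σ t : ℝ), 0 ≤ σ → ‖r (t + σ) - r t‖ ≤ σ := by
    intro σ t hσ
    have := hlip.dist_le_mul (t + σ) t
    rw [dist_eq_norm, dist_eq_norm] at this
    simpa [abs_of_nonneg hσ] using this
  -- integrability facts
  have hcont2 : ∀ σ : ℝ, Continuous (fun t => ‖r (t + σ) - r t‖^2) := by
    intro σ
    exact (((hc.comp (continuous_id.add continuous_const)).sub hc).norm.pow 2)
  have hcont1 : ∀ σ : ℝ, Continuous (fun t => ‖r (t + σ) - r t‖) := by
    intro σ
    exact ((hc.comp (continuous_id.add continuous_const)).sub hc).norm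
  -- Step A : L² bound for small shifts
  have stepA : ∀ σ : ℝ, 0 ≤ σ → ∫ t in Ioc (0:ℝ) 1, ‖r (t + σ) - r t‖^2 ≤ σ^2 := by
    intro σ hσ
    have hb : ∀ t ∈ Ioc (0:ℝ) 1, ‖r (t + σ) - r t‖^2 ≤ σ^2 := by
      intro t _
      exact pow_le_pow_left₀ (norm_nonneg _) (hchord σ t hσ) 2
    calc ∫ t in Ioc (0:ℝ) 1, ‖r (t + σ) - r t‖^2
        ≤ ∫ _t in Ioc (0:ℝ) 1, σ^2 := by
          apply setIntegral_mono_on ((hcont2 σ).integrableOn_Ioc)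
            (integrableOn_const (by simp [Real.volume_Ioc]))
            measurableSet_Ioc hb
      _ = σ^2 := by simp [Real.volume_Ioc]
  -- Step B : finite partial sums of (πn)² aₙ are ≤ 1
  have stepB : ∀ N : ℕ, ∑ n ∈ Finset.Icc (-(N:ℤ)) (N:ℤ), (π*n)^2 * a n ≤ 1 := by
    intro N
    have hm : ∀ m : ℕ, ∑ n ∈ Finset.Icc (-(N:ℤ)) (N:ℤ),
        (((m:ℝ)+1) * Real.sin ((π*n) / ((m:ℝ)+1)))^2 * a n ≤ 1 := by
      intro m
      set h : ℝ := 1/((m:ℝ)+1) with hh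
      have hm0 : (0:ℝ) < (m:ℝ)+1 := by positivity
      have hhp : 0 ≤ h := by positivity
      have h1 : ∑ n ∈ Finset.Icc (-(N:ℤ)) (N:ℤ), Real.sin (π*n*h)^2 * a n
          ≤ h^2 := by
        refine le_trans (Summable.sum_le_tsum _ (fun n _ => mul_nonneg (sq_nonneg _) (ha0 n)) (hid h).1) ?_
        rw [← (hid h).2]
        exact stepA h hhp
      have h2 : ∑ n ∈ Finset.Icc (-(N:ℤ)) (N:ℤ),
          (((m:ℝ)+1) * Real.sin ((π*n) / ((m:ℝ)+1)))^2 * a n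
          = ((m:ℝ)+1)^2 * ∑ n ∈ Finset.Icc (-(N:ℤ)) (N:ℤ), Real.sin (π*n*h)^2 * a n := by
        rw [Finset.mul_sum]
        refine Finset.sum_congr rfl (fun n _ => ?_)
        have : π*(n:ℝ)*h = (π*n) / ((m:ℝ)+1) := by rw [hh]; field_simp
        rw [this]; ring
      rw [h2]
      calc ((m:ℝ)+1)^2 * ∑ n ∈ Finset.Icc (-(N:ℤ)) (N:ℤ), Real.sin (π*n*h)^2 * a n
          ≤ ((m:ℝ)+1)^2 * h^2 := by
            apply mul_le_mul_of_nonneg_left h1 (by positivity)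
        _ = 1 := by rw [hh]; field_simp
    have hlim : Filter.Tendsto (fun m : ℕ => ∑ n ∈ Finset.Icc (-(N:ℤ)) (N:ℤ),
        (((m:ℝ)+1) * Real.sin ((π*n) / ((m:ℝ)+1)))^2 * a n) Filter.atTop
        (nhds (∑ n ∈ Finset.Icc (-(N:ℤ)) (N:ℤ), (π*n)^2 * a n)) := by
      apply tendsto_finset_sum
      intro n _
      exact (((tendsto_mul_sin_div (π*n)).pow 2).mul_const (a n))
    exact le_of_tendsto hlim (Filter.Eventually.of_forall hm)
  -- Step C : summability and total bound
  have hnn : ∀ n : ℤ, 0 ≤ (π*n)^2 * a n := fun n => mul_nonneg (sq_nonneg _) (ha0 n)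
  have hfin : ∀ u : Finset ℤ, ∑ n ∈ u, (π*n)^2 * a n ≤ 1 := by
    intro u
    set N : ℕ := u.sup (fun n => n.natAbs) with hN
    have hsub : u ⊆ Finset.Icc (-(N:ℤ)) (N:ℤ) := by
      intro n hn
      rw [Finset.mem_Icc]
      have h5 : |n| ≤ (N:ℤ) := by
        rw [Int.abs_eq_natAbs]
        exact_mod_cast Finset.le_sup (f := fun n : ℤ => n.natAbs) hn
      exact abs_le.mp h5
    refine le_trans (Finset.sum_le_sum_of_subset_of_nonneg hsub
      (fun n _ _ => hnn n)) (stepB N)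
  have hsumC : Summable (fun n : ℤ => (π*n)^2 * a n) :=
    summable_of_sum_le hnn hfin
  have htsumC : ∑' n : ℤ, (π*n)^2 * a n ≤ 1 := Summable.tsum_le_of_sum_le hsumC hfin
  -- Step D : L² bound at s
  have hπ : (0:ℝ) < π := Real.pi_pos
  have stepD : ∫ t in Ioc (0:ℝ) 1, ‖r (t + s) - r t‖^2 ≤ Real.sin (π*s)^2 / π^2 := by
    rw [(hid s).2]
    have hterm : ∀ n : ℤ, Real.sin (π*n*s)^2 * a n
        ≤ (Real.sin (π*s)^2 / π^2) * ((π*n)^2 * a n) := by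
      intro n
      have h1 : π*(n:ℝ)*s = (n:ℝ) * (π*s) := by ring
      have h2 : Real.sin (π*n*s)^2 ≤ (n:ℝ)^2 * Real.sin (π*s)^2 := by
        rw [h1]; exact sin_sq_int_mul (π*s) n
      have h3 : (Real.sin (π*s)^2 / π^2) * (π*n)^2 = (n:ℝ)^2 * Real.sin (π*s)^2 := by
        field_simp
      calc Real.sin (π*n*s)^2 * a n ≤ ((n:ℝ)^2 * Real.sin (π*s)^2) * a n :=
            mul_le_mul_of_nonneg_right h2 (ha0 n)
        _ = (Real.sin (π*s)^2 / π^2) * ((π*n)^2 * a n) := by rw [← h3]; ring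
    calc ∑' n : ℤ, Real.sin (π*n*s)^2 * a n
        ≤ ∑' n : ℤ, (Real.sin (π*s)^2 / π^2) * ((π*n)^2 * a n) :=
          Summable.tsum_le_tsum hterm (hid s).1 (hsumC.mul_left _)
      _ = (Real.sin (π*s)^2 / π^2) * ∑' n : ℤ, (π*n)^2 * a n := tsum_mul_left
      _ ≤ (Real.sin (π*s)^2 / π^2) * 1 :=
          mul_le_mul_of_nonneg_left htsumC (by positivity)
      _ = Real.sin (π*s)^2 / π^2 := mul_one _
  -- Step E : Cauchy–Schwarz
  set I : ℝ := ∫ t in Ioc (0:ℝ) 1, ‖r (t + s) - r t‖ with hI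
  have hInn : 0 ≤ I := by
    rw [hI]
    exact setIntegral_nonneg measurableSet_Ioc (fun t _ => norm_nonneg _)
  have hu : IntegrableOn (fun t => ‖r (t + s) - r t‖) (Ioc (0:ℝ) 1) volume :=
    (hcont1 s).integrableOn_Ioc
  have hu2 : IntegrableOn (fun t => ‖r (t + s) - r t‖^2) (Ioc (0:ℝ) 1) volume :=
    (hcont2 s).integrableOn_Ioc
  have hconst : ∀ cst : ℝ, IntegrableOn (fun _ : ℝ => cst) (Ioc (0:ℝ) 1) volume :=
    fun cst => integrableOn_const (by simp [Real.volume_Ioc])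
  have hCS : I^2 ≤ ∫ t in Ioc (0:ℝ) 1, ‖r (t + s) - r t‖^2 := by
    have h0 : 0 ≤ ∫ t in Ioc (0:ℝ) 1, (‖r (t + s) - r t‖ - I)^2 :=
      setIntegral_nonneg measurableSet_Ioc (fun t _ => sq_nonneg _)
    have e7 : ∫ t in Ioc (0:ℝ) 1, (‖r (t + s) - r t‖ - I)^2
        = ∫ t in Ioc (0:ℝ) 1, ((‖r (t + s) - r t‖^2 - (2*I) * ‖r (t + s) - r t‖) + I^2) :=
      integral_congr_ae (Filter.Eventually.of_forall (fun t => by ring))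
    have e3 : ∫ t in Ioc (0:ℝ) 1, ((‖r (t + s) - r t‖^2 - (2*I) * ‖r (t + s) - r t‖) + I^2)
        = (∫ t in Ioc (0:ℝ) 1, (‖r (t + s) - r t‖^2 - (2*I) * ‖r (t + s) - r t‖))
          + ∫ _t in Ioc (0:ℝ) 1, (I^2 : ℝ) :=
      integral_add (hu2.sub (hu.const_mul (2*I))) (hconst _)
    have e4 : ∫ t in Ioc (0:ℝ) 1, (‖r (t + s) - r t‖^2 - (2*I) * ‖r (t + s) - r t‖)
        = (∫ t in Ioc (0:ℝ) 1, ‖r (t + s) - r t‖^2)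
          - ∫ t in Ioc (0:ℝ) 1, (2*I) * ‖r (t + s) - r t‖ :=
      integral_sub hu2 (hu.const_mul (2*I))
    have e5 : ∫ t in Ioc (0:ℝ) 1, (2*I) * ‖r (t + s) - r t‖
        = (2*I) * ∫ t in Ioc (0:ℝ) 1, ‖r (t + s) - r t‖ :=
      integral_const_mul (2*I) _
    have e6 : ∫ _t in Ioc (0:ℝ) 1, (I^2 : ℝ) = I^2 := by
      rw [setIntegral_const]
      simp [Real.volume_Ioc]
    rw [e7, e3, e4, e5, e6, ← hI] at h0
    nlinarith [h0]
  -- conclude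
  have hsin : 0 ≤ Real.sin (π*s) := by
    apply Real.sin_nonneg_of_nonneg_of_le_pi
    · have := hs.1; positivity
    · have h1 := hs.2
      nlinarith [hπ]
  have hfinal : I ≤ Real.sin (π*s) / π := by
    have h1 : I^2 ≤ (Real.sin (π*s) / π)^2 := by
      rw [div_pow]
      exact le_trans hCS stepD
    calc I = Real.sqrt (I^2) := (Real.sqrt_sq hInn).symm
      _ ≤ Real.sqrt ((Real.sin (π*s) / π)^2) := Real.sqrt_le_sqrt h1
      _ = Real.sin (π*s) / π := Real.sqrt_sq (by positivity)
  rw [intervalIntegral.integral_of_le zero_le_one]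
  exact hfinal

end
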